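/- Let A be a finite-dimensional factor with tracial state τ, B ⊆ A a subfactor, and E_B the τ-preserving conditional expectation onto B. For every state φ on A (not necessarily faithful), Ŝ(φ|_B) − Ŝ(φ) = H(ρ_φ, ρ_{φ|_B}) = H(φ, φ ∘ E_B). -/

import Mathlib

open scoped ComplexOrder

/-- The full matrix algebra `M_N(ℂ)`, our model of a finite-dimensional factor. -/
abbrev Mat (N : ℕ) := Matrix (Fin N) (Fin N) ℂ

variable {N : ℕ}

/-- The tracial state `τ` on `Mat N`. -/
noncomputable def tau (x : Mat N) : ℂ := x.trace / N

/-- Matrix logarithm via the continuous functional calculus. -/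
noncomputable def mlog (x : Mat N) : Mat N := cfc Real.log x

/-- Matrix square root via the continuous functional calculus. -/
noncomputable def msqrt (x : Mat N) : Mat N := cfc Real.sqrt x

/-- Matrix inverse square root via the continuous functional calculus. -/
noncomputable def misqrt (x : Mat N) : Mat N := cfc (fun t : ℝ => (Real.sqrt t)⁻¹) x

/-- The entropy `Ŝ(ψ) = -ψ(log ρ_ψ) = -τ(ρ log ρ)` of the state with τ-density `ρ`. -/
noncomputable def Shat (ρ : Mat N) : ℝ := -(tau (ρ * mlog ρ)).re

/-- The von Neumann entropy `S(ψ|_B) = -Tr_B(D log D) = Ŝ(ψ|_B) + log k` of the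
restriction of a state to a subfactor `B ≅ M_k`, expressed through the τ-density `ρ`
of the restriction and the matrix size `k` of the subfactor. -/
noncomputable def Sres (ρ : Mat N) (k : ℕ) : ℝ := Shat ρ + Real.log k

/-- `ρ` is the density with respect to the tracial state `τ` of a state of `Mat N`. -/
def IsTauDensity (ρ : Mat N) : Prop := ρ.PosSemidef ∧ tau ρ = 1

/-- `E` is the τ-preserving conditional expectation onto the unital *-subalgebra `B`:
it maps into `B`, fixes `B` pointwise, and `Tr(b x) = Tr(b (E x))` for all `b ∈ B`.
These properties determine `E` uniquely. -/
def IsCondExp (B : StarSubalgebra ℂ (Mat N)) (E : Mat N →ₗ[ℂ] Mat N) : Prop :=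
  (∀ x, E x ∈ B) ∧ (∀ b ∈ B, E b = b) ∧
    (∀ x : Mat N, ∀ b ∈ B, (b * x).trace = (b * E x).trace)

/-- `B` is a subfactor: its relative center is trivial (so `B` is a full matrix algebra). -/
def IsFactorSub (B : StarSubalgebra ℂ (Mat N)) : Prop :=
  ∀ x ∈ B, (∀ y ∈ B, x * y = y * x) → ∃ c : ℂ, x = c • (1 : Mat N)

/-- The commuting square condition: `B = AB ⊓ BC` and `E_AB ∘ E_BC = E_BC ∘ E_AB = E_B`. -/
def CommSquare (AB BC B : StarSubalgebra ℂ (Mat N))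
    (EAB EBC EB : Mat N →ₗ[ℂ] Mat N) : Prop :=
  IsCondExp AB EAB ∧ IsCondExp BC EBC ∧ IsCondExp B EB ∧
    B = AB ⊓ BC ∧ (∀ x, EAB (EBC x) = EB x) ∧ (∀ x, EBC (EAB x) = EB x)

open Classical in
/-- Relative entropy `H(ρ₁, ρ₂) = τ(ρ₁ (log ρ₁ - log ρ₂))` of two τ-densities, equal to `+∞`
unless the support of `ρ₁` is dominated by the support of `ρ₂` (for positive semidefinite
matrices the support condition is the inclusion of kernels `ker ρ₂ ⊆ ker ρ₁`). -/
noncomputable def relEnt (ρ₁ ρ₂ : Mat N) : EReal :=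
  if ∀ v : Fin N → ℂ, ρ₂.mulVec v = 0 → ρ₁.mulVec v = 0 then
    (((tau (ρ₁ * (mlog ρ₁ - mlog ρ₂))).re : ℝ) : EReal)
  else ⊤

/-- Complete positivity of a linear map on `Mat N`. -/
def IsCP (E : Mat N →ₗ[ℂ] Mat N) : Prop :=
  ∀ (k : ℕ) (x a : Fin k → Mat N),
    (∑ i, ∑ j, star (a i) * E (star (x i) * x j) * a j).PosSemidef

/-- `p` is a minimal projection of the subalgebra `B`. -/
def IsMinProj (B : StarSubalgebra ℂ (Mat N)) (p : Mat N) : Prop :=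
  p ∈ B ∧ p.IsHermitian ∧ p * p = p ∧ p ≠ 0 ∧
    ∀ q ∈ B, q.IsHermitian → q * q = q → q * p = q → q = 0 ∨ q = p

/-- The subfactor `B` of `Mat N` has matrix size `k` (i.e. `B ≅ M_k`) in the sense that its
minimal projections have ambient matrix trace `N / k`; this encodes the assumption that the
ambient matrix trace restricts on `B` to `N/k` times the canonical matrix trace of `B`. -/
def HasMatSize (B : StarSubalgebra ℂ (Mat N)) (k : ℕ) : Prop :=
  ∀ p, IsMinProj B p → Matrix.trace p = ((N : ℂ) / k)

/-- `Θ` is a grading: an involutive *-automorphism. -/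
def IsGrading (Θ : Mat N ≃⋆ₐ[ℂ] Mat N) : Prop := ∀ x, Θ (Θ x) = x

/-- The subalgebra `A` is invariant under the grading. -/
def ThetaInvariant (Θ : Mat N ≃⋆ₐ[ℂ] Mat N) (A : StarSubalgebra ℂ (Mat N)) : Prop :=
  ∀ x ∈ A, Θ x ∈ A

/-- Graded commutation relations between (the subalgebras of) two disjoint regions:
even elements of one commute with all elements of the other, odd elements anticommute. -/
def GradedComm (Θ : Mat N ≃⋆ₐ[ℂ] Mat N) (A C : StarSubalgebra ℂ (Mat N)) : Prop :=
  ∀ x ∈ A, ∀ y ∈ C,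
    ((Θ x = x ∨ Θ y = y) → x * y = y * x) ∧
      (Θ x = -x → Θ y = -y → x * y + y * x = 0)

/-- `ω` is a state (positive normalized linear functional). -/
def IsState (ω : Mat N →ₗ[ℂ] ℂ) : Prop :=
  ω 1 = 1 ∧ ∀ x : Mat N, 0 ≤ ω (star x * x)

/-- Markov property of the state `ω` with respect to a triplet with first algebra `AA` and
pair algebra `AB`: there is a quasi-conditional expectation (a completely positive map into
`AB` which is a module map over `AA`) fixing `AA` pointwise and preserving `ω`. -/
def IsMarkovState (AA AB : StarSubalgebra ℂ (Mat N)) (ω : Mat N →ₗ[ℂ] ℂ) : Prop :=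
  ∃ E : Mat N →ₗ[ℂ] Mat N, IsCP E ∧ (∀ x, E x ∈ AB) ∧
    (∀ c ∈ AA, ∀ x, E (c * x) = c * E x) ∧ (∀ c ∈ AA, E c = c) ∧
    ∀ x, ω (E x) = ω x

/-- Markov property, formulated for the state with τ-density `ρ`. -/
def IsMarkovDensity (AA AB : StarSubalgebra ℂ (Mat N)) (ρ : Mat N) : Prop :=
  ∃ E : Mat N →ₗ[ℂ] Mat N, IsCP E ∧ (∀ x, E x ∈ AB) ∧
    (∀ c ∈ AA, ∀ x, E (c * x) = c * E x) ∧ (∀ c ∈ AA, E c = c) ∧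
    ∀ x, tau (ρ * E x) = tau (ρ * x)

/-- The restriction of `ω` to the subalgebra generated by `AA` and `AC` is separable:
a convex combination of product states for the pair `(AA, AC)`. -/
def SeparableOn (AA AC : StarSubalgebra ℂ (Mat N)) (ω : Mat N →ₗ[ℂ] ℂ) : Prop :=
  ∃ (n : ℕ) (lam : Fin n → ℝ) (ωi : Fin n → (Mat N →ₗ[ℂ] ℂ)),
    (∀ i, 0 ≤ lam i) ∧ (∑ i, lam i = 1) ∧ (∀ i, IsState (ωi i)) ∧
    (∀ i, ∀ x ∈ AA, ∀ y ∈ AC, ωi i (x * y) = ωi i x * ωi i y) ∧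
    ∀ z ∈ (AA ⊔ AC : StarSubalgebra ℂ (Mat N)), ω z = ∑ i, (lam i : ℂ) * ωi i z

/-- The conditional expectation `E` is sufficient for the pair of states with τ-densities
`ρ₁, ρ₂`: some completely positive trace-preserving (recovery) map `T` recovers the densities
from their compressions `E ρ₁`, `E ρ₂` (recall that the τ-density of `ψ ∘ E` is `E ρ_ψ`). -/
def IsSufficient (E : Mat N →ₗ[ℂ] Mat N) (ρ₁ ρ₂ : Mat N) : Prop :=
  ∃ T : Mat N →ₗ[ℂ] Mat N, IsCP T ∧ (∀ x, (T x).trace = x.trace) ∧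
    T (E ρ₁) = ρ₁ ∧ T (E ρ₂) = ρ₂

section Aux

open Matrix Polynomial

variable {N : ℕ}

lemma contOn_spectrum (f : ℝ → ℝ) (a : Mat N) : ContinuousOn f (spectrum ℝ a) := by
  rw [continuousOn_iff_continuous_restrict]
  exact continuous_of_discreteTopology

/-- A polynomial interpolating `f` on the (finite) real spectrum of `a`. -/
noncomputable def interpPoly (a : Mat N) (f : ℝ → ℝ) : Polynomial ℝ :=
  Lagrange.interpolate (Matrix.finite_real_spectrum (A := a)).toFinset id f

lemma interpPoly_eval {a : Mat N} (f : ℝ → ℝ) {x : ℝ} (hx : x ∈ spectrum ℝ a) :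
    (interpPoly a f).eval x = f x := by
  have hmem : x ∈ (Matrix.finite_real_spectrum (A := a)).toFinset := by simpa using hx
  exact Lagrange.eval_interpolate_at_node (r := f) (Set.injOn_id _) hmem

lemma cfc_eq_aeval {a : Mat N} (ha : IsSelfAdjoint a) (f : ℝ → ℝ) :
    cfc f a = Polynomial.aeval a (interpPoly a f) := by
  rw [← cfc_polynomial (interpPoly a f) a ha]
  exact cfc_congr fun x hx => (interpPoly_eval f hx).symm

lemma cfc_mem' {B : StarSubalgebra ℂ (Mat N)} {a : Mat N} (haB : a ∈ B)
    (ha : IsSelfAdjoint a) (f : ℝ → ℝ) : cfc f a ∈ B := by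
  rw [cfc_eq_aeval ha f]
  have h1 : Polynomial.aeval a (interpPoly a f) ∈ Algebra.adjoin ℝ {a} :=
    Polynomial.aeval_mem_adjoin_singleton ℝ a
  have h2 : Algebra.adjoin ℝ {a} ≤ B.toSubalgebra.restrictScalars ℝ :=
    Algebra.adjoin_le (by simpa using haB)
  simpa using h2 h1

lemma trace_conjTranspose_mul_self_eq_zero' {M : Mat N} (h : (Mᴴ * M).trace = 0) : M = 0 := by
  have hexp : (Mᴴ * M).trace = ∑ i, ∑ j, star (M j i) * M j i := by
    simp [Matrix.trace, Matrix.mul_apply, Matrix.conjTranspose_apply, Matrix.diag]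
  rw [hexp] at h
  have hz := (Finset.sum_eq_zero_iff_of_nonneg (fun i _ =>
      Finset.sum_nonneg fun j _ => star_mul_self_nonneg (M j i))).mp h
  ext i j
  have hji := (Finset.sum_eq_zero_iff_of_nonneg
      (fun k _ => star_mul_self_nonneg (M k j))).mp (hz j (Finset.mem_univ j)) i
      (Finset.mem_univ i)
  rcases mul_eq_zero.mp hji with h0 | h0
  · simpa using star_eq_zero.mp h0
  · simpa using h0

lemma eq_zero_of_trace_mul_eq_zero {M : Mat N}
    (h : ∀ x : Mat N, (M * x).trace = 0) : M = 0 := by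
  have h0 := h Mᴴ
  have : (Mᴴᴴ * Mᴴ).trace = 0 := by rwa [Matrix.conjTranspose_conjTranspose]
  have := trace_conjTranspose_mul_self_eq_zero' this
  simpa using congrArg Matrix.conjTranspose this

lemma posSemidef_trace_zero {M : Mat N} (hM : M.PosSemidef) (h : M.trace = 0) : M = 0 := by
  exact hM.trace_eq_zero_iff.mp h

end Aux

open Matrix in
/-- for every (not necessarily faithful) state `φ` with τ-density `ρ` on a
finite-dimensional factor and subfactor `B` with τ-preserving conditional expectation `E`,
`Ŝ(φ|_B) − Ŝ(φ) = H(ρ_φ, ρ_{φ|_B}) = H(φ, φ ∘ E)`.  Here `ρ_{φ|_B} = E ρ` and `σ` is the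
τ-density of `φ ∘ E`, characterized by `τ(ρ · E x) = τ(σ x)` for all `x`. -/
theorem stmt5 {N : ℕ} (hN : 0 < N) (B : StarSubalgebra ℂ (Mat N)) (hBf : IsFactorSub B)
    (E : Mat N →ₗ[ℂ] Mat N) (hE : IsCondExp B E)
    (ρ : Mat N) (hρ : IsTauDensity ρ)
    (σ : Mat N) (hσpsd : σ.PosSemidef) (hσ : ∀ x : Mat N, tau (ρ * E x) = tau (σ * x)) :
    ((Shat (E ρ) - Shat ρ : ℝ) : EReal) = relEnt ρ (E ρ) ∧
      relEnt ρ (E ρ) = relEnt ρ σ := by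
  obtain ⟨hEmem, hEfix, hEtr⟩ := hE
  obtain ⟨hρpsd, -⟩ := hρ
  have hNc : (N : ℂ) ≠ 0 := Nat.cast_ne_zero.mpr hN.ne'
  have htr : ∀ x : Mat N, (ρ * E x).trace = (σ * x).trace := by
    intro x
    have h := hσ x
    rw [tau, tau, div_eq_div_iff hNc hNc] at h
    exact mul_right_cancel₀ hNc h
  have hσE : σ = E ρ := by
    have key : ∀ x : Mat N, ((σ - E ρ) * x).trace = 0 := by
      intro x
      have h1 : (E x * ρ).trace = (E x * E ρ).trace := hEtr ρ (E x) (hEmem x)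
      have h2 : (E ρ * x).trace = (E ρ * E x).trace := hEtr x (E ρ) (hEmem ρ)
      have h3 : (σ * x).trace = (E ρ * x).trace := by
        rw [← htr x, Matrix.trace_mul_comm ρ (E x), h1,
          Matrix.trace_mul_comm (E x) (E ρ), ← h2]
      rw [Matrix.sub_mul, Matrix.trace_sub, h3, sub_self]
    have h0 : σ - E ρ = 0 := eq_zero_of_trace_mul_eq_zero key
    exact sub_eq_zero.mp h0
  subst hσE
  have hApsd : (E ρ).PosSemidef := hσpsd
  have hAH : (E ρ).IsHermitian := hApsd.1
  have hAsa : IsSelfAdjoint (E ρ) := hAH.isSelfAdjoint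
  have hAB : E ρ ∈ B := hEmem ρ
  set f : ℝ → ℝ := fun t => if t = 0 then 1 else 0 with hf
  set q : Mat N := cfc f (E ρ) with hq
  have hfc : ContinuousOn f (spectrum ℝ (E ρ)) := contOn_spectrum f (E ρ)
  have hidc : ContinuousOn (fun x : ℝ => x) (spectrum ℝ (E ρ)) := contOn_spectrum _ _
  have hqB : q ∈ B := cfc_mem' hAB hAsa f
  have hq_sa : IsSelfAdjoint q := cfc_predicate f (E ρ)
  have hqH : q.IsHermitian := hq_sa
  have hqq : q * q = q := by
    rw [hq, ← cfc_mul f f (E ρ) hfc hfc]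
    exact cfc_congr fun x _ => by by_cases h : x = 0 <;> simp [hf, h]
  have hqA : q * E ρ = 0 := by
    have h1 : q * E ρ = cfc (fun x : ℝ => f x * x) (E ρ) := by
      rw [hq]
      calc cfc f (E ρ) * E ρ = cfc f (E ρ) * cfc (fun x : ℝ => x) (E ρ) := by
            rw [cfc_id' ℝ (E ρ) hAsa]
        _ = cfc (fun x : ℝ => f x * x) (E ρ) := (cfc_mul f _ (E ρ) hfc hidc).symm
    rw [h1, show (fun x : ℝ => f x * x) = (fun _ : ℝ => (0 : ℝ)) from
      funext fun x => by by_cases h : x = 0 <;> simp [hf, h]]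
    exact cfc_zero ℝ (E ρ)
  have hAq : E ρ * q = 0 := by
    have h := congrArg star hqA
    rwa [StarMul.star_mul, hq_sa.star_eq, hAsa.star_eq, star_zero] at h
  have hspec_nonneg : ∀ x ∈ spectrum ℝ (E ρ), 0 ≤ x := by
    intro x hx
    rw [hAH.spectrum_real_eq_range_eigenvalues] at hx
    obtain ⟨i, rfl⟩ := hx
    exact hApsd.eigenvalues_nonneg i
  have hunit : IsUnit (cfc (fun x : ℝ => f x + x) (E ρ)) := by
    rw [isUnit_cfc_iff _ _ (contOn_spectrum _ _) hAsa]
    intro x hx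
    rcases eq_or_ne x 0 with h | h
    · simp [hf, h]
    · have hx0 := hspec_nonneg x hx
      simpa [hf, h] using h
  have hsum : cfc (fun x : ℝ => f x + x) (E ρ) = q + E ρ := by
    rw [cfc_add (E ρ) f (fun x : ℝ => x) hfc hidc, cfc_id' ℝ (E ρ) hAsa, hq]
  have hinj : Function.Injective ((q + E ρ).mulVec) :=
    Matrix.mulVec_injective_iff_isUnit.mpr (hsum ▸ hunit)
  have hker : ∀ v : Fin N → ℂ, (E ρ).mulVec v = 0 → q.mulVec v = v := by
    intro v hv
    have a1 : q.mulVec (q.mulVec v) = q.mulVec v := by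
      rw [Matrix.mulVec_mulVec, hqq]
    have a2 : (E ρ).mulVec (q.mulVec v) = 0 := by
      rw [Matrix.mulVec_mulVec, hAq, Matrix.zero_mulVec]
    have e1 : (q + E ρ).mulVec (v - q.mulVec v) = 0 := by
      rw [Matrix.add_mulVec, Matrix.mulVec_sub, Matrix.mulVec_sub, a1, a2, hv]
      simp
    have e2 : (q + E ρ).mulVec 0 = 0 := by simp
    have := hinj (e1.trans e2.symm)
    exact (sub_eq_zero.mp this).symm
  have hqρtr : (q * ρ).trace = 0 := by
    rw [hEtr ρ q hqB, hqA, Matrix.trace_zero]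
  have hqρq : q * ρ * q = 0 := by
    have hpsd : (qᴴ * ρ * q).PosSemidef := hρpsd.conjTranspose_mul_mul_same q
    rw [hqH] at hpsd
    refine posSemidef_trace_zero hpsd ?_
    rw [Matrix.trace_mul_cycle q ρ q, hqq]
    exact hqρtr
  have hρq : ρ * q = 0 := by
    have hsq : ∃ S : Mat N, Sᴴ = S ∧ S * S = ρ := by
      refine ⟨cfc Real.sqrt ρ, (show IsSelfAdjoint (cfc Real.sqrt ρ) from cfc_predicate _ ρ), ?_⟩
      rw [← cfc_mul _ _ ρ (contOn_spectrum _ _) (contOn_spectrum _ _)]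
      conv_rhs => rw [← cfc_id' ℝ ρ hρpsd.1.isSelfAdjoint]
      refine cfc_congr fun x hx => ?_
      have hx0 : 0 ≤ x := by
        rw [hρpsd.1.spectrum_real_eq_range_eigenvalues] at hx
        obtain ⟨i, rfl⟩ := hx
        exact hρpsd.eigenvalues_nonneg i
      exact Real.mul_self_sqrt hx0
    obtain ⟨S, hSH, hSS⟩ := hsq
    have h1 : (S * q)ᴴ * (S * q) = q * ρ * q := by
      rw [Matrix.conjTranspose_mul, hSH, hqH,
        Matrix.mul_assoc q, ← Matrix.mul_assoc S, hSS,
        ← Matrix.mul_assoc]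
    have h2 : S * q = 0 :=
      Matrix.conjTranspose_mul_self_eq_zero.mp (h1.trans hqρq)
    calc ρ * q = S * (S * q) := by
          rw [← Matrix.mul_assoc, hSS]
      _ = 0 := by rw [h2, Matrix.mul_zero]
  have hsupp : ∀ v : Fin N → ℂ, (E ρ).mulVec v = 0 → ρ.mulVec v = 0 := by
    intro v hv
    calc ρ.mulVec v = ρ.mulVec (q.mulVec v) := by rw [hker v hv]
      _ = (ρ * q).mulVec v := by rw [Matrix.mulVec_mulVec]
      _ = 0 := by rw [hρq, Matrix.zero_mulVec]
  have hlogB : mlog (E ρ) ∈ B := cfc_mem' hAB hAsa Real.log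
  have htrlog : (ρ * mlog (E ρ)).trace = (E ρ * mlog (E ρ)).trace := by
    have h := hEtr ρ (mlog (E ρ)) hlogB
    rw [Matrix.trace_mul_comm ρ (mlog (E ρ)), h, Matrix.trace_mul_comm]
  refine ⟨?_, rfl⟩
  unfold relEnt
  rw [if_pos hsupp, EReal.coe_eq_coe_iff]
  have key : tau (ρ * (mlog ρ - mlog (E ρ))) = tau (ρ * mlog ρ) - tau (E ρ * mlog (E ρ)) := by
    simp only [tau, mul_sub, Matrix.trace_sub, htrlog]
    ring
  rw [key]
  simp only [Shat, Complex.sub_re]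
  ring
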